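/- Let n ≥ 1, α ∈ ℝ, and let λ = (λ_1,…,λ_s) be a partition with positive parts. Then, in the field of fractions of ℝ[x_1,…,x_n], D(α) p_λ = (1/2)·( α·Σ_{k=1}^s λ_k(λ_k−1) + Σ_{k=1}^s λ_k(2n−λ_k−1) )·p_λ + (α/2)·Σ_{(j,k): j≠k} λ_j·λ_k·p_{λ_j+λ_k}·∏_{m∉{j,k}} p_{λ_m} + (1/2)·Σ_{k=1}^s λ_k·(∏_{m≠k} p_{λ_m})·Σ_{m=1}^{λ_k−1} p_{λ_k−m}·p_m, where the middle sum runs over ordered pairs (j,k) with j ≠ k. -/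

import Mathlib

open Finset MvPolynomial

variable (n : ℕ)

/-- The power sum `p_r = x_1^r + ⋯ + x_n^r`. -/
noncomputable def psumP (r : ℕ) : MvPolynomial (Fin n) ℝ :=
  ∑ i : Fin n, X i ^ r

/-- The operator `U_n f = (1/2) Σ_i x_i² ∂²f/∂x_i²`. -/
noncomputable def Un (f : MvPolynomial (Fin n) ℝ) : MvPolynomial (Fin n) ℝ :=
  C (1 / 2 : ℝ) * ∑ i : Fin n, X i ^ 2 * pderiv i (pderiv i f)

/-- The operator `V_n f = Σ_{i≠j} (x_i²/(x_i-x_j)) ∂f/∂x_i`, landing in the fraction field. -/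
noncomputable def Vn (f : MvPolynomial (Fin n) ℝ) : FractionRing (MvPolynomial (Fin n) ℝ) :=
  ∑ p ∈ (Finset.univ : Finset (Fin n)).offDiag,
    algebraMap (MvPolynomial (Fin n) ℝ) (FractionRing (MvPolynomial (Fin n) ℝ)) (X p.1 ^ 2) /
      algebraMap (MvPolynomial (Fin n) ℝ) (FractionRing (MvPolynomial (Fin n) ℝ))
        (X p.1 - X p.2) *
      algebraMap (MvPolynomial (Fin n) ℝ) (FractionRing (MvPolynomial (Fin n) ℝ))
        (pderiv p.1 f)

/-- The Stanley–Hanlon operator `D(α) = α U_n + V_n`. -/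
noncomputable def Dop (α : ℝ) (f : MvPolynomial (Fin n) ℝ) :
    FractionRing (MvPolynomial (Fin n) ℝ) :=
  algebraMap (MvPolynomial (Fin n) ℝ) (FractionRing (MvPolynomial (Fin n) ℝ)) (C α * Un n f) +
    Vn n f

/-- Real scalars inside the fraction field. -/
noncomputable def cK (c : ℝ) : FractionRing (MvPolynomial (Fin n) ℝ) :=
  algebraMap (MvPolynomial (Fin n) ℝ) (FractionRing (MvPolynomial (Fin n) ℝ)) (C c)

/-- The image of a polynomial in the fraction field. -/
noncomputable def φK (f : MvPolynomial (Fin n) ℝ) : FractionRing (MvPolynomial (Fin n) ℝ) :=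
  algebraMap (MvPolynomial (Fin n) ℝ) (FractionRing (MvPolynomial (Fin n) ℝ)) f

/-! ### Auxiliary lemmas -/

section Aux

variable {n}

lemma cK_mul' (a b : ℝ) : cK n (a * b) = cK n a * cK n b := by
  rw [cK, cK, cK, map_mul, map_mul]

lemma cK_add' (a b : ℝ) : cK n (a + b) = cK n a + cK n b := by
  rw [cK, cK, cK, map_add, map_add]

lemma φK_mul' (a b : MvPolynomial (Fin n) ℝ) : φK n (a * b) = φK n a * φK n b := map_mul _ _ _

lemma φK_C_mul (c : ℝ) (f : MvPolynomial (Fin n) ℝ) : φK n (C c * f) = cK n c * φK n f := by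
  rw [φK, map_mul, cK, φK]

lemma pderiv_psumP (i : Fin n) (r : ℕ) :
    pderiv i (psumP n r) = (r : MvPolynomial (Fin n) ℝ) * X i ^ (r - 1) := by
  rw [psumP, map_sum, Finset.sum_eq_single i]
  · simp [pderiv_pow]
  · intro j _ hj; simp [pderiv_pow, pderiv_X_of_ne hj]
  · simp

lemma pderiv_finprod {ι : Type*} [DecidableEq ι] (i : Fin n) (f : ι → MvPolynomial (Fin n) ℝ)
    (t : Finset ι) :
    pderiv i (∏ m ∈ t, f m) = ∑ k ∈ t, pderiv i (f k) * ∏ m ∈ t.erase k, f m := by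
  induction t using Finset.induction_on with
  | empty => simp
  | insert a t' ha ih =>
    rw [Finset.prod_insert ha, pderiv_mul, ih, Finset.sum_insert ha, Finset.erase_insert ha,
      Finset.mul_sum]
    congr 1
    apply Finset.sum_congr rfl
    intro k hk
    rw [Finset.erase_insert_of_ne (by rintro rfl; exact ha hk),
      Finset.prod_insert (fun h => ha (Finset.mem_of_mem_erase h))]
    ring

lemma sum_offDiag_erase {ι β : Type*} [DecidableEq ι] [AddCommGroup β] (s : Finset ι)
    (F : ι × ι → β) :
    ∑ q ∈ s.offDiag, F q = ∑ a ∈ s, ∑ b ∈ s.erase a, F (a, b) := by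
  have h1 : ∑ q ∈ s ×ˢ s, F q = ∑ q ∈ s.diag, F q + ∑ q ∈ s.offDiag, F q := by
    rw [← Finset.sum_union (Finset.disjoint_diag_offDiag s), Finset.diag_union_offDiag]
  have h3 : ∑ q ∈ s.diag, F q = ∑ a ∈ s, F (a, a) := Finset.sum_diag s _
  have h2 : ∑ a ∈ s, ∑ b ∈ s.erase a, F (a, b) =
      (∑ a ∈ s, ∑ b ∈ s, F (a, b)) - ∑ a ∈ s, F (a, a) := by
    rw [← Finset.sum_sub_distrib]
    exact Finset.sum_congr rfl fun a ha => Finset.sum_erase_eq_sub ha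
  rw [h2, ← Finset.sum_product', h1, h3]; abel

lemma offDiag_pow_sum (a b : ℕ) :
    ∑ q ∈ (Finset.univ : Finset (Fin n)).offDiag, X q.1 ^ a * X q.2 ^ b =
      psumP n a * psumP n b - psumP n (a + b) := by
  rw [sum_offDiag_erase]
  have key : ∀ i : Fin n, ∑ j ∈ Finset.univ.erase i, (X i ^ a * X j ^ b : MvPolynomial (Fin n) ℝ)
      = X i ^ a * psumP n b - X i ^ (a + b) := by
    intro i
    rw [← Finset.mul_sum, Finset.sum_erase_eq_sub (Finset.mem_univ i), mul_sub, ← pow_add, psumP]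
  rw [Finset.sum_congr rfl fun i _ => key i, Finset.sum_sub_distrib, ← Finset.sum_mul, psumP,
    psumP, psumP]

lemma psumP_zero : psumP n 0 = (n : MvPolynomial (Fin n) ℝ) := by simp [psumP]

lemma range_psum_identity (r : ℕ) (hr : 1 ≤ r) :
    ∑ a ∈ Finset.range (r + 1), (psumP n a * psumP n (r - a) - psumP n r) =
      C (2 * (n : ℝ) - (r : ℝ) - 1) * psumP n r +
        ∑ m ∈ Finset.Ico 1 r, psumP n (r - m) * psumP n m := by
  have hsplit : ∑ a ∈ Finset.range (r + 1), psumP n a * psumP n (r - a) =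
      psumP n 0 * psumP n r + (∑ a ∈ Finset.Ico 1 r, psumP n a * psumP n (r - a))
        + psumP n r * psumP n 0 := by
    rw [Finset.sum_range_succ, Nat.sub_self]
    rw [Finset.range_eq_Ico, Finset.sum_eq_sum_Ico_succ_bot (by omega)]
    ring_nf
    simp [Nat.sub_zero]
    ring
  rw [Finset.sum_sub_distrib, hsplit, Finset.sum_const, Finset.card_range, psumP_zero]
  have hcomm : ∑ a ∈ Finset.Ico 1 r, psumP n a * psumP n (r - a)
      = ∑ m ∈ Finset.Ico 1 r, psumP n (r - m) * psumP n m :=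
    Finset.sum_congr rfl fun a _ => mul_comm _ _
  rw [hcomm]
  have hC : (C (2 * (n : ℝ) - (r : ℝ) - 1) : MvPolynomial (Fin n) ℝ)
      = 2 * (n : MvPolynomial (Fin n) ℝ) - (r : MvPolynomial (Fin n) ℝ) - 1 := by
    simp [map_sub, map_mul, map_natCast, map_one, map_ofNat]
  rw [hC]
  ring

lemma X_sub_X_ne_zero {i j : Fin n} (h : i ≠ j) : (X i - X j : MvPolynomial (Fin n) ℝ) ≠ 0 := by
  intro hc
  exact h (MvPolynomial.X_injective (sub_eq_zero.mp hc))

lemma φK_ne_zero {f : MvPolynomial (Fin n) ℝ} (h : f ≠ 0) : φK n f ≠ 0 := by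
  rw [φK]
  exact fun hc => h ((map_eq_zero_iff _
    (IsFractionRing.injective (MvPolynomial (Fin n) ℝ)
      (FractionRing (MvPolynomial (Fin n) ℝ)))).mp hc)

lemma pair_geom {i j : Fin n} (h : i ≠ j) (r : ℕ) :
    φK n (X i ^ (r + 1)) / φK n (X i - X j) + φK n (X j ^ (r + 1)) / φK n (X j - X i) =
      φK n (∑ a ∈ Finset.range (r + 1), X i ^ a * X j ^ (r - a)) := by
  have hd : φK n (X i - X j) ≠ 0 := φK_ne_zero (X_sub_X_ne_zero h)
  have hneg : φK n (X j - X i) = -φK n (X i - X j) := by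
    rw [φK, φK, ← map_neg]; ring_nf
  rw [hneg, div_neg, ← sub_eq_add_neg, div_sub_div_same, φK, φK, ← map_sub]
  have hg : (X i ^ (r + 1) - X j ^ (r + 1) : MvPolynomial (Fin n) ℝ)
      = (∑ a ∈ Finset.range (r + 1), X i ^ a * X j ^ (r + 1 - 1 - a)) * (X i - X j) :=
    (geom_sum₂_mul _ _ _).symm
  simp only [Nat.add_sub_cancel] at hg
  rw [hg, map_mul, mul_div_assoc]
  rw [show (algebraMap (MvPolynomial (Fin n) ℝ) (FractionRing (MvPolynomial (Fin n) ℝ)))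
      (X i - X j) = φK n (X i - X j) from rfl, div_self hd, mul_one, φK]

lemma cK_two_half : cK n (1 / 2) * 2 = 1 := by
  rw [cK, show ((2 : FractionRing (MvPolynomial (Fin n) ℝ))) =
      algebraMap (MvPolynomial (Fin n) ℝ) _ 2 from (map_ofNat _ 2).symm, ← map_mul]
  rw [show (C (1/2 : ℝ) * 2 : MvPolynomial (Fin n) ℝ) = 1 by
    rw [show (2 : MvPolynomial (Fin n) ℝ) = C 2 from (map_ofNat C 2).symm, ← map_mul]
    norm_num]
  exact map_one _

lemma swap_offDiag (g : Fin n × Fin n → FractionRing (MvPolynomial (Fin n) ℝ)) :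
    ∑ q ∈ (Finset.univ : Finset (Fin n)).offDiag, g q =
      ∑ q ∈ (Finset.univ : Finset (Fin n)).offDiag, g q.swap := by
  apply Finset.sum_nbij' (fun q => q.swap) (fun q => q.swap) <;>
    simp [Finset.mem_offDiag, ne_comm]

lemma key_S (r : ℕ) (hr : 1 ≤ r) :
    ∑ q ∈ (Finset.univ : Finset (Fin n)).offDiag, φK n (X q.1 ^ (r + 1)) / φK n (X q.1 - X q.2) =
      cK n (1 / 2) * φK n (C (2 * (n : ℝ) - (r : ℝ) - 1) * psumP n r +
        ∑ m ∈ Finset.Ico 1 r, psumP n (r - m) * psumP n m) := by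
  set S := ∑ q ∈ (Finset.univ : Finset (Fin n)).offDiag,
    φK n (X q.1 ^ (r + 1)) / φK n (X q.1 - X q.2) with hS
  have hdouble : S + S = φK n (C (2 * (n : ℝ) - (r : ℝ) - 1) * psumP n r +
      ∑ m ∈ Finset.Ico 1 r, psumP n (r - m) * psumP n m) := by
    nth_rewrite 2 [hS]
    rw [swap_offDiag (fun q => φK n (X q.1 ^ (r + 1)) / φK n (X q.1 - X q.2))]
    rw [hS, ← Finset.sum_add_distrib]
    have key : ∀ q ∈ (Finset.univ : Finset (Fin n)).offDiag,
        φK n (X q.1 ^ (r + 1)) / φK n (X q.1 - X q.2) +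
          φK n (X q.swap.1 ^ (r + 1)) / φK n (X q.swap.1 - X q.swap.2) =
        φK n (∑ a ∈ Finset.range (r + 1), X q.1 ^ a * X q.2 ^ (r - a)) := by
      intro q hq
      exact pair_geom (Finset.mem_offDiag.mp hq).2.2 r
    rw [Finset.sum_congr rfl key]
    simp only [φK]
    rw [← map_sum]
    congr 1
    rw [Finset.sum_comm, ← range_psum_identity r hr]
    apply Finset.sum_congr rfl
    intro a ha
    have hab : a + (r - a) = r := by
      have := Finset.mem_range.mp ha; omega
    rw [offDiag_pow_sum a (r - a), hab]
  have h2 : cK n (1 / 2) * (S + S) = S := by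
    rw [← two_mul, ← mul_assoc, mul_comm (cK n (1/2)) 2, mul_comm 2 (cK n (1/2)), cK_two_half,
      one_mul]
  rw [← h2, hdouble]

end Aux

section UnP
variable {n : ℕ}

-- the power trick for the diagonal second-derivative term
lemma pow_trick (i : Fin n) (e : ℕ) (he : 1 ≤ e) :
    ((e : MvPolynomial (Fin n) ℝ) * ((e - 1 : ℕ) : MvPolynomial (Fin n) ℝ)) *
      (X i ^ 2 * X i ^ (e - 1 - 1)) =
    ((e * (e - 1) : ℕ) : MvPolynomial (Fin n) ℝ) * X i ^ e := by
  rcases Nat.lt_or_ge e 2 with h | h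
  · interval_cases e <;> simp
  · push_cast
    rw [← pow_add]
    congr 2
    omega

lemma Un_P (s : ℕ) (lam : Fin s → ℕ) (hpos : ∀ j, 0 < lam j) :
    Un n (∏ m : Fin s, psumP n (lam m)) =
      C ((1 / 2) * ∑ m : Fin s, ((lam m : ℝ) * ((lam m : ℝ) - 1))) *
          ∏ m : Fin s, psumP n (lam m) +
        C (1 / 2 : ℝ) * ∑ q ∈ (Finset.univ : Finset (Fin s)).offDiag,
          C ((lam q.1 : ℝ) * (lam q.2 : ℝ)) *
            (psumP n (lam q.1 + lam q.2) *
              ∏ m ∈ Finset.univ \ {q.1, q.2}, psumP n (lam m)) := by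
  classical
  set P : MvPolynomial (Fin n) ℝ := ∏ m : Fin s, psumP n (lam m) with hPdef
  set Q : Fin s → MvPolynomial (Fin n) ℝ := fun k => ∏ m ∈ Finset.univ.erase k, psumP n (lam m) with hQdef
  have hQP : ∀ k, psumP n (lam k) * Q k = P := by
    intro k
    rw [hPdef, hQdef]
    exact Finset.mul_prod_erase _ (fun m => psumP n (lam m)) (Finset.mem_univ k)
  have hD1 : ∀ i : Fin n, pderiv i P = ∑ k : Fin s,
      (lam k : MvPolynomial (Fin n) ℝ) * X i ^ (lam k - 1) * Q k := by
    intro i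
    rw [hPdef, pderiv_finprod]
    exact Finset.sum_congr rfl fun k _ => by rw [pderiv_psumP]
  -- expansion of the derivative of Q k
  have hDQ : ∀ (i : Fin n) (k : Fin s), pderiv i (Q k) = ∑ j ∈ Finset.univ.erase k,
      (lam j : MvPolynomial (Fin n) ℝ) * X i ^ (lam j - 1) * ∏ m ∈ (Finset.univ.erase k).erase j, psumP n (lam m) := by
    intro i k
    rw [hQdef, pderiv_finprod]
    exact Finset.sum_congr rfl fun j _ => by rw [pderiv_psumP]
  -- per-variable second derivative term
  have hstep : ∀ (i : Fin n) (k : Fin s),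
      X i ^ 2 * pderiv i ((lam k : MvPolynomial (Fin n) ℝ) * X i ^ (lam k - 1) * Q k) =
        ((lam k * (lam k - 1) : ℕ) : MvPolynomial (Fin n) ℝ) * X i ^ (lam k) * Q k +
          ∑ j ∈ Finset.univ.erase k, ((lam k : MvPolynomial (Fin n) ℝ) * (lam j : MvPolynomial (Fin n) ℝ)) * X i ^ (lam k + lam j) *
            ∏ m ∈ (Finset.univ.erase k).erase j, psumP n (lam m) := by
    intro i k
    have h1 : pderiv i ((lam k : MvPolynomial (Fin n) ℝ) * X i ^ (lam k - 1) * Q k)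
        = (lam k : MvPolynomial (Fin n) ℝ) * (((lam k - 1 : ℕ) : MvPolynomial (Fin n) ℝ) * X i ^ (lam k - 1 - 1) * 1) * Q k
          + (lam k : MvPolynomial (Fin n) ℝ) * X i ^ (lam k - 1) * pderiv i (Q k) := by
      rw [show ((lam k : MvPolynomial (Fin n) ℝ)) = C ((lam k : ℕ) : ℝ) from (map_natCast _ _).symm, mul_assoc,
        pderiv_C_mul, pderiv_mul, pderiv_pow, pderiv_X_self]
      push_cast
      ring
    rw [h1, mul_add]
    congr 1
    · rw [show X i ^ 2 * ((lam k : MvPolynomial (Fin n) ℝ) * (((lam k - 1 : ℕ) : MvPolynomial (Fin n) ℝ) * X i ^ (lam k - 1 - 1) * 1) * Q k)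
          = ((lam k : MvPolynomial (Fin n) ℝ) * ((lam k - 1 : ℕ) : MvPolynomial (Fin n) ℝ)) * (X i ^ 2 * X i ^ (lam k - 1 - 1)) * Q k by
          ring, pow_trick i (lam k) (hpos k)]
    · rw [hDQ i k, Finset.mul_sum, Finset.mul_sum]
      apply Finset.sum_congr rfl
      intro j hj
      have hexp : 2 + ((lam k - 1) + (lam j - 1)) = lam k + lam j := by
        have := hpos k; have := hpos j; omega
      rw [show X i ^ 2 * ((lam k : MvPolynomial (Fin n) ℝ) * X i ^ (lam k - 1) *
          ((lam j : MvPolynomial (Fin n) ℝ) * X i ^ (lam j - 1) * ∏ m ∈ (Finset.univ.erase k).erase j, psumP n (lam m)))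
        = ((lam k : MvPolynomial (Fin n) ℝ) * (lam j : MvPolynomial (Fin n) ℝ)) * (X i ^ 2 * (X i ^ (lam k - 1) * X i ^ (lam j - 1))) *
          ∏ m ∈ (Finset.univ.erase k).erase j, psumP n (lam m) by ring,
        ← pow_add, ← pow_add, hexp]
  -- now sum over i
  have hmain : ∑ i : Fin n, X i ^ 2 * pderiv i (pderiv i P) =
      (∑ k : Fin s, ((lam k * (lam k - 1) : ℕ) : MvPolynomial (Fin n) ℝ)) * P +
        ∑ k : Fin s, ∑ j ∈ Finset.univ.erase k, ((lam k : MvPolynomial (Fin n) ℝ) * (lam j : MvPolynomial (Fin n) ℝ)) *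
          (psumP n (lam k + lam j) * ∏ m ∈ (Finset.univ.erase k).erase j, psumP n (lam m)) := by
    have e1 : ∀ i : Fin n, X i ^ 2 * pderiv i (pderiv i P) =
        ∑ k : Fin s, X i ^ 2 * pderiv i ((lam k : MvPolynomial (Fin n) ℝ) * X i ^ (lam k - 1) * Q k) := by
      intro i
      rw [hD1 i, map_sum, Finset.mul_sum]
    rw [Finset.sum_congr rfl fun i _ => e1 i]
    rw [Finset.sum_congr rfl fun i _ => Finset.sum_congr rfl fun k _ => hstep i k]
    rw [Finset.sum_comm]
    rw [Finset.sum_congr rfl fun k _ => Finset.sum_add_distrib,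
      Finset.sum_add_distrib, Finset.sum_mul]
    congr 1
    · apply Finset.sum_congr rfl
      intro k _
      rw [← Finset.sum_mul, ← Finset.mul_sum, ← hQP k, psumP]
      ring
    · apply Finset.sum_congr rfl
      intro k _
      rw [Finset.sum_comm]
      apply Finset.sum_congr rfl
      intro j _
      rw [← Finset.sum_mul, ← Finset.mul_sum, psumP]
      ring
  rw [Un, hmain, mul_add]
  congr 1
  · have hcast : (∑ k : Fin s, ((lam k * (lam k - 1) : ℕ) : MvPolynomial (Fin n) ℝ))
        = C (∑ m : Fin s, ((lam m : ℝ) * ((lam m : ℝ) - 1))) := by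
      rw [map_sum]
      apply Finset.sum_congr rfl
      intro k _
      rw [show ((lam k * (lam k - 1) : ℕ) : MvPolynomial (Fin n) ℝ)
          = C (((lam k * (lam k - 1) : ℕ)) : ℝ) from (map_natCast _ _).symm]
      congr 1
      have h1 : (1 : ℕ) ≤ lam k := hpos k
      push_cast [Nat.cast_sub h1]
      ring
    rw [hcast, ← mul_assoc, ← map_mul]
  · congr 1
    rw [sum_offDiag_erase (Finset.univ : Finset (Fin s))
      (fun q => C ((lam q.1 : ℝ) * (lam q.2 : ℝ)) *
        (psumP n (lam q.1 + lam q.2) * ∏ m ∈ Finset.univ \ {q.1, q.2}, psumP n (lam m)))]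
    apply Finset.sum_congr rfl
    intro k _
    apply Finset.sum_congr rfl
    intro j hj
    have hset : (Finset.univ \ {k, j} : Finset (Fin s)) = (Finset.univ.erase k).erase j := by
      ext a
      simp only [Finset.mem_sdiff, Finset.mem_univ, Finset.mem_insert, Finset.mem_singleton,
        Finset.mem_erase, true_and]
      tauto
    rw [hset, map_mul, map_natCast, map_natCast]

end UnP

section VnP
variable {n : ℕ}

lemma Vn_P (s : ℕ) (lam : Fin s → ℕ) (hpos : ∀ j, 0 < lam j) :
    Vn n (∏ m : Fin s, psumP n (lam m)) =
      ∑ k : Fin s, cK n (lam k : ℝ) * φK n (∏ m ∈ Finset.univ.erase k, psumP n (lam m)) *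
        ∑ q ∈ (Finset.univ : Finset (Fin n)).offDiag,
          φK n (X q.1 ^ (lam k + 1)) / φK n (X q.1 - X q.2) := by
  classical
  set P : MvPolynomial (Fin n) ℝ := ∏ m : Fin s, psumP n (lam m) with hPdef
  set Q : Fin s → MvPolynomial (Fin n) ℝ := fun k => ∏ m ∈ Finset.univ.erase k, psumP n (lam m)
    with hQdef
  have hD1 : ∀ i : Fin n, pderiv i P = ∑ k : Fin s,
      (lam k : MvPolynomial (Fin n) ℝ) * X i ^ (lam k - 1) * Q k := by
    intro i
    rw [hPdef, pderiv_finprod]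
    exact Finset.sum_congr rfl fun k _ => by rw [pderiv_psumP]
  have hterm : ∀ (q : Fin n × Fin n) (k : Fin s),
      φK n (X q.1 ^ 2) / φK n (X q.1 - X q.2) *
          φK n ((lam k : MvPolynomial (Fin n) ℝ) * X q.1 ^ (lam k - 1) * Q k) =
        cK n (lam k : ℝ) * φK n (Q k) *
          (φK n (X q.1 ^ (lam k + 1)) / φK n (X q.1 - X q.2)) := by
    intro q k
    have hpow : φK n (X q.1 ^ 2) * φK n (X q.1 ^ (lam k - 1)) = φK n (X q.1 ^ (lam k + 1)) := by
      rw [φK, φK, φK, ← map_mul, ← pow_add]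
      congr 2
      have := hpos k; omega
    rw [show ((lam k : MvPolynomial (Fin n) ℝ)) = C ((lam k : ℕ) : ℝ) from (map_natCast _ _).symm,
      φK_mul', φK_mul']
    rw [show φK n (C ((lam k : ℕ) : ℝ)) = cK n ((lam k : ℕ) : ℝ) from rfl]
    rw [div_mul_eq_mul_div, show φK n (X q.1 ^ 2) * (cK n ((lam k : ℕ) : ℝ) *
        φK n (X q.1 ^ (lam k - 1)) * φK n (Q k)) =
      cK n ((lam k : ℕ) : ℝ) * φK n (Q k) *
        (φK n (X q.1 ^ 2) * φK n (X q.1 ^ (lam k - 1))) by ring, hpow, mul_div_assoc]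
  rw [Vn]
  have e1 : ∀ q ∈ (Finset.univ : Finset (Fin n)).offDiag,
      algebraMap (MvPolynomial (Fin n) ℝ) (FractionRing (MvPolynomial (Fin n) ℝ)) (X q.1 ^ 2) /
          algebraMap (MvPolynomial (Fin n) ℝ) (FractionRing (MvPolynomial (Fin n) ℝ))
            (X q.1 - X q.2) *
          algebraMap (MvPolynomial (Fin n) ℝ) (FractionRing (MvPolynomial (Fin n) ℝ))
            (pderiv q.1 P) =
        ∑ k : Fin s, cK n (lam k : ℝ) * φK n (Q k) *
          (φK n (X q.1 ^ (lam k + 1)) / φK n (X q.1 - X q.2)) := by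
    intro q _
    rw [show algebraMap (MvPolynomial (Fin n) ℝ) (FractionRing (MvPolynomial (Fin n) ℝ))
        (pderiv q.1 P) = φK n (pderiv q.1 P) from rfl, hD1 q.1, φK, map_sum, Finset.mul_sum]
    exact Finset.sum_congr rfl fun k _ => hterm q k
  rw [Finset.sum_congr rfl e1, Finset.sum_comm]
  exact Finset.sum_congr rfl fun k _ => by rw [← Finset.mul_sum]

end VnP

section Final
variable {n : ℕ}

lemma φK_add' (a b : MvPolynomial (Fin n) ℝ) : φK n (a + b) = φK n a + φK n b := map_add _ _ _

lemma φK_sum' {ι : Type*} (t : Finset ι) (f : ι → MvPolynomial (Fin n) ℝ) :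
    φK n (∑ i ∈ t, f i) = ∑ i ∈ t, φK n (f i) := map_sum _ _ _

lemma cK_sum' {ι : Type*} (t : Finset ι) (f : ι → ℝ) :
    cK n (∑ i ∈ t, f i) = ∑ i ∈ t, cK n (f i) := by
  rw [cK, map_sum, map_sum]
  rfl

lemma hVn_final (s : ℕ) (lam : Fin s → ℕ) (hpos : ∀ j, 0 < lam j) :
    Vn n (∏ m : Fin s, psumP n (lam m)) =
      cK n ((1 / 2) * ∑ m : Fin s, (lam m : ℝ) * (2 * (n : ℝ) - (lam m : ℝ) - 1)) *
          φK n (∏ m : Fin s, psumP n (lam m)) +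
        cK n (1 / 2) * ∑ j : Fin s,
          cK n (lam j : ℝ) *
            φK n ((∏ m ∈ Finset.univ.erase j, psumP n (lam m)) *
              ∑ m ∈ Finset.Ico 1 (lam j), psumP n (lam j - m) * psumP n m) := by
  classical
  rw [Vn_P s lam hpos]
  have hQP : ∀ k : Fin s, φK n (psumP n (lam k)) *
      φK n (∏ m ∈ Finset.univ.erase k, psumP n (lam m)) =
      φK n (∏ m : Fin s, psumP n (lam m)) := by
    intro k
    rw [← φK_mul']
    congr 1
    exact Finset.mul_prod_erase _ (fun m => psumP n (lam m)) (Finset.mem_univ k)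
  have hk : ∀ k : Fin s,
      cK n (lam k : ℝ) * φK n (∏ m ∈ Finset.univ.erase k, psumP n (lam m)) *
        ∑ q ∈ (Finset.univ : Finset (Fin n)).offDiag,
          φK n (X q.1 ^ (lam k + 1)) / φK n (X q.1 - X q.2) =
      cK n ((1 / 2) * ((lam k : ℝ) * (2 * (n : ℝ) - (lam k : ℝ) - 1))) *
          φK n (∏ m : Fin s, psumP n (lam m)) +
        cK n (1 / 2) * (cK n (lam k : ℝ) *
          φK n ((∏ m ∈ Finset.univ.erase k, psumP n (lam m)) *
            ∑ m ∈ Finset.Ico 1 (lam k), psumP n (lam k - m) * psumP n m)) := by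
    intro k
    rw [key_S (lam k) (hpos k), φK_add', φK_C_mul,
      φK_mul' (∏ m ∈ Finset.univ.erase k, psumP n (lam m))
        (∑ m ∈ Finset.Ico 1 (lam k), psumP n (lam k - m) * psumP n m)]
    rw [cK_mul' (1/2) ((lam k : ℝ) * (2 * (n : ℝ) - (lam k : ℝ) - 1)),
      cK_mul' (lam k : ℝ) (2 * (n : ℝ) - (lam k : ℝ) - 1)]
    rw [← hQP k]
    ring
  rw [Finset.sum_congr rfl fun k _ => hk k, Finset.sum_add_distrib, ← Finset.sum_mul,
    Finset.mul_sum]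
  congr 1
  rw [← cK_sum']
  congr 1
  rw [Finset.mul_sum]

end Final

/-- The action of the Stanley–Hanlon operator `D(α)` on the power sums `p_λ`. -/
theorem Dop_powerSum (hn : 1 ≤ n) (α : ℝ) (s : ℕ) (lam : Fin s → ℕ)
    (hpos : ∀ j, 0 < lam j) (hdec : Antitone lam) :
    Dop n α (∏ m : Fin s, psumP n (lam m)) =
      cK n ((1 / 2) * (α * ∑ m : Fin s, ((lam m : ℝ) * ((lam m : ℝ) - 1)) +
            ∑ m : Fin s, (lam m : ℝ) * (2 * (n : ℝ) - (lam m : ℝ) - 1))) *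
          φK n (∏ m : Fin s, psumP n (lam m)) +
        cK n (α / 2) * ∑ p ∈ (Finset.univ : Finset (Fin s)).offDiag,
          cK n ((lam p.1 : ℝ) * (lam p.2 : ℝ)) *
            φK n (psumP n (lam p.1 + lam p.2) *
              ∏ m ∈ Finset.univ \ {p.1, p.2}, psumP n (lam m)) +
        cK n (1 / 2) * ∑ j : Fin s,
          cK n (lam j : ℝ) *
            φK n ((∏ m ∈ Finset.univ.erase j, psumP n (lam m)) *
              ∑ m ∈ Finset.Ico 1 (lam j), psumP n (lam j - m) * psumP n m) := by
  classical
  have hUn : algebraMap (MvPolynomial (Fin n) ℝ) (FractionRing (MvPolynomial (Fin n) ℝ))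
      (C α * Un n (∏ m : Fin s, psumP n (lam m))) =
      cK n (α * ((1 / 2) * ∑ m : Fin s, ((lam m : ℝ) * ((lam m : ℝ) - 1)))) *
          φK n (∏ m : Fin s, psumP n (lam m)) +
        cK n (α * (1 / 2)) * ∑ p ∈ (Finset.univ : Finset (Fin s)).offDiag,
          cK n ((lam p.1 : ℝ) * (lam p.2 : ℝ)) *
            φK n (psumP n (lam p.1 + lam p.2) *
              ∏ m ∈ Finset.univ \ {p.1, p.2}, psumP n (lam m)) := by
    rw [show algebraMap (MvPolynomial (Fin n) ℝ) (FractionRing (MvPolynomial (Fin n) ℝ))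
        (C α * Un n (∏ m : Fin s, psumP n (lam m))) =
        φK n (C α * Un n (∏ m : Fin s, psumP n (lam m))) from rfl]
    rw [φK_C_mul, Un_P s lam hpos, φK_add', φK_C_mul, φK_C_mul, φK_sum']
    rw [Finset.sum_congr rfl fun p (_ : p ∈ (Finset.univ : Finset (Fin s)).offDiag) =>
      φK_C_mul ((lam p.1 : ℝ) * (lam p.2 : ℝ)) _]
    rw [mul_add, ← mul_assoc, ← cK_mul']
    congr 1
    rw [← mul_assoc, ← cK_mul']
  rw [Dop, hUn, hVn_final s lam hpos]
  have hc : cK n ((1 / 2) * (α * ∑ m : Fin s, ((lam m : ℝ) * ((lam m : ℝ) - 1)) +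
      ∑ m : Fin s, (lam m : ℝ) * (2 * (n : ℝ) - (lam m : ℝ) - 1))) =
      cK n (α * ((1 / 2) * ∑ m : Fin s, ((lam m : ℝ) * ((lam m : ℝ) - 1)))) +
        cK n ((1 / 2) * ∑ m : Fin s, (lam m : ℝ) * (2 * (n : ℝ) - (lam m : ℝ) - 1)) := by
    rw [← cK_add']
    congr 1
    ring
  have hc2 : cK n (α / 2) = cK n (α * (1 / 2)) := by
    congr 1
    ring
  rw [hc, hc2]
  ring
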